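/- Let t be a form function on Ω ⊆ ℂ with constant domain 𝒟 in the complex Hilbert space H such that each t(λ) is sectorial, and assume that for each λ₀ ∈ Ω there exist r > 0, C > 0 and a function w : B_r(λ₀) ∩ Ω → [0, ∞) with w(λ) → 0 as λ → λ₀ such that |t(λ₀)[f] − t(λ)[f]| ≤ w(λ)·(|Re t(λ₀)[f]| + C‖f‖²) for all λ ∈ B_r(λ₀) ∩ Ω and all f ∈ 𝒟. Then closure(W(t)) ∩ Ω ⊆ W_Ψ(t); that is, if λ₀ ∈ Ω is the limit of a sequence of points of W(t), then 0 ∈ closure{t(λ₀)[f] : f ∈ 𝒟, ‖f‖ = 1}. -/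

import Mathlib

open Filter Topology Real

noncomputable section

variable {H : Type*} [NormedAddCommGroup H] [InnerProductSpace ℂ H] [CompleteSpace H]

/-- For a family `t` of sectorial sesquilinear forms (linear in the first,
conjugate-linear in the second argument) with constant domain `𝒟`, satisfying the
continuity assumption
`|t(λ₀)[f] − t(λ)[f]| ≤ w(λ)(|Re t(λ₀)[f]| + C‖f‖²)` near every `λ₀ ∈ Ω` with `w(λ) → 0`,
one has `closure(W(t)) ∩ Ω ⊆ W_Ψ(t)`, i.e. if `λ₀ ∈ Ω` is in the closure of
`W(t) = {λ ∈ Ω : ∃ f ∈ 𝒟, f ≠ 0, t(λ)[f] = 0}`, then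
`0 ∈ closure {t(λ₀)[f] : f ∈ 𝒟, ‖f‖ = 1}`. -/
theorem closure_numRange_subset_pseudoNumRange_of_sectorial_forms
    (Ω : Set ℂ) (𝒟 : Submodule ℂ H)
    (t : ℂ → (𝒟 →ₗ[ℂ] (𝒟 →ₛₗ[starRingEnd ℂ] ℂ)))
    (hsect : ∀ l ∈ Ω, ∃ γ θ : ℝ, 0 ≤ θ ∧ θ < π / 2 ∧
      ∀ f : 𝒟, ‖(f : H)‖ = 1 → |(t l f f).im| ≤ Real.tan θ * ((t l f f).re - γ))
    (hcont : ∀ l₀ ∈ Ω, ∃ r > (0 : ℝ), ∃ C > (0 : ℝ), ∃ w : ℂ → ℝ,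
      (∀ l ∈ Metric.ball l₀ r ∩ Ω, 0 ≤ w l) ∧
      Tendsto w (nhdsWithin l₀ (Metric.ball l₀ r ∩ Ω)) (nhds 0) ∧
      ∀ l ∈ Metric.ball l₀ r ∩ Ω, ∀ f : 𝒟,
        ‖t l₀ f f - t l f f‖ ≤ w l * (|(t l₀ f f).re| + C * ‖(f : H)‖ ^ 2)) :
    closure {l : ℂ | l ∈ Ω ∧ ∃ f : 𝒟, (f : H) ≠ 0 ∧ t l f f = 0} ∩ Ω ⊆
      {l : ℂ | l ∈ Ω ∧
        (0 : ℂ) ∈ closure {z : ℂ | ∃ f : 𝒟, ‖(f : H)‖ = 1 ∧ t l f f = z}} := by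
  rintro l₀ ⟨hcl, hΩ⟩
  refine ⟨hΩ, ?_⟩
  rw [Metric.mem_closure_iff]
  intro ε hε
  obtain ⟨r, hr, C, hC, w, hwpos, hwlim, hest⟩ := hcont l₀ hΩ
  -- choose δ so that on ball l₀ δ ∩ (ball l₀ r ∩ Ω), w < min (1/2) (ε/(2C))
  set ε' : ℝ := min (1/2 : ℝ) (ε / (2 * C)) with hε'def
  have hε' : 0 < ε' := lt_min (by norm_num) (by positivity)
  have hev : ∀ᶠ l in nhdsWithin l₀ (Metric.ball l₀ r ∩ Ω), w l < ε' :=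
    Filter.Tendsto.eventually_lt_const hε' hwlim
  rw [eventually_nhdsWithin_iff] at hev
  obtain ⟨δ, hδ, hball⟩ := Metric.eventually_nhds_iff_ball.mp hev
  -- pick a point of W(t) within min δ r of l₀
  have hclose := Metric.mem_closure_iff.mp hcl (min δ r) (lt_min hδ hr)
  obtain ⟨l, ⟨hlΩ, f, hf0, hf⟩, hdist⟩ := hclose
  have hlball : l ∈ Metric.ball l₀ r ∩ Ω := by
    refine ⟨?_, hlΩ⟩
    rw [Metric.mem_ball, dist_comm]
    exact lt_of_lt_of_le hdist (min_le_right _ _)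
  have hwl : w l < ε' := by
    apply hball l ?_ hlball
    rw [Metric.mem_ball, dist_comm]
    exact lt_of_lt_of_le hdist (min_le_left _ _)
  -- normalize f
  have hnf : (0 : ℝ) < ‖(f : H)‖ := norm_pos_iff.mpr hf0
  set g : 𝒟 := ((‖(f : H)‖)⁻¹ : ℂ) • f with hgdef
  have hg1 : ‖(g : H)‖ = 1 := by
    simp only [hgdef, Submodule.coe_smul, norm_smul]
    rw [norm_inv, Complex.norm_real, Real.norm_eq_abs, abs_of_pos hnf]
    field_simp
  have hgt : ∀ l' : ℂ, t l' g g = ((‖(f : H)‖ : ℂ))⁻¹ ^ 2 * t l' f f := by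
    intro l'
    have hstar : (starRingEnd ℂ) ((‖(f : H)‖ : ℂ))⁻¹ = ((‖(f : H)‖ : ℂ))⁻¹ := by
      rw [map_inv₀, Complex.conj_ofReal]
    have h1 : t l' g = ((‖(f : H)‖ : ℂ))⁻¹ • t l' f := by rw [hgdef, map_smul]
    rw [h1, LinearMap.smul_apply, hgdef, LinearMap.map_smulₛₗ, hstar, smul_eq_mul,
      smul_eq_mul]
    ring
  have hgl : t l g g = 0 := by rw [hgt, hf, mul_zero]
  set z : ℂ := t l₀ g g with hzdef
  refine ⟨z, ⟨g, hg1, rfl⟩, ?_⟩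
  -- the estimate
  have hest' := hest l hlball g
  rw [hgl, sub_zero, hg1] at hest'
  have hre : |z.re| ≤ ‖z‖ := Complex.abs_re_le_norm z
  have hz0 : (0 : ℝ) ≤ ‖z‖ := norm_nonneg z
  have hw0 : 0 ≤ w l := hwpos l hlball
  have key : ‖z‖ ≤ w l * (‖z‖ + C) := by
    calc ‖z‖ ≤ w l * (|z.re| + C * 1 ^ 2) := hest'
    _ ≤ w l * (‖z‖ + C) := by
        apply mul_le_mul_of_nonneg_left _ hw0
        nlinarith
  have hwl1 : w l < 1/2 := lt_of_lt_of_le hwl (min_le_left _ _)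
  have hwl2 : w l < ε / (2 * C) := lt_of_lt_of_le hwl (min_le_right _ _)
  have hwC : w l * (2 * C) < ε := (lt_div_iff₀ (by positivity)).mp hwl2
  have hwA : w l * ‖z‖ ≤ (1/2) * ‖z‖ :=
    mul_le_mul_of_nonneg_right hwl1.le hz0
  have habs : ‖z‖ < ε := by nlinarith
  rw [dist_eq_norm, zero_sub, norm_neg]
  exact habs

end
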